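/- Let α ≥ 2 be a natural number and let k = 2α − 1 (so k is odd and α = ⌈(k+1)/2⌉). Then for every real number p, δ^{k,α}(p) = (∑_{ℓ=α}^{k} (k choose ℓ) p^ℓ (1−p)^{k−ℓ}) − p. -/
import Mathlib


/-- The expected relative progress of one Slush round with sample size `k`,
majority threshold `α`, at fraction `p` of parties holding opinion 1. -/
noncomputable def slushDelta (k α : ℕ) (p : ℝ) : ℝ :=
  ∑ ℓ ∈ Finset.Icc α k,
    (k.choose ℓ : ℝ) * (p ^ ℓ * (1 - p) ^ (k - ℓ + 1) - (1 - p) ^ ℓ * p ^ (k - ℓ + 1))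

/-- for `α ≥ 2` and odd `k = 2α − 1`,
`δ^{k,α}(p) = (∑_{ℓ=α}^{k} C(k,ℓ) p^ℓ (1−p)^{k−ℓ}) − p`. -/
theorem slushDelta_short_form_odd (α : ℕ) (hα : 2 ≤ α) (k : ℕ) (hk : k = 2 * α - 1)
    (p : ℝ) :
    slushDelta k α p
      = (∑ ℓ ∈ Finset.Icc α k, (k.choose ℓ : ℝ) * p ^ ℓ * (1 - p) ^ (k - ℓ)) - p := by
  have hαk : α ≤ k := by omega
  set q : ℝ := 1 - p with hq
  set T : ℝ := ∑ ℓ ∈ Finset.Icc α k, (k.choose ℓ : ℝ) * p ^ ℓ * q ^ (k - ℓ) with hT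
  -- binomial theorem
  have hbin : ∑ j ∈ Finset.range (k + 1), (k.choose j : ℝ) * p ^ j * q ^ (k - j) = 1 := by
    have := add_pow p q k
    have hpq : p + q = 1 := by rw [hq]; ring
    rw [hpq, one_pow] at this
    rw [this]
    exact Finset.sum_congr rfl (fun j _ => by ring)
  -- split the binomial sum
  have hsplit : ∑ j ∈ Finset.range α, (k.choose j : ℝ) * p ^ j * q ^ (k - j) = 1 - T := by
    have h : Finset.range (k + 1) = Finset.range α ∪ Finset.Icc α k := by
      ext x
      simp [Finset.mem_range, Finset.mem_Icc, Finset.mem_union]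
      omega
    have hdisj : Disjoint (Finset.range α) (Finset.Icc α k) := by
      rw [Finset.disjoint_left]
      intro x hx hx'
      simp [Finset.mem_range] at hx
      simp [Finset.mem_Icc] at hx'
      omega
    rw [h, Finset.sum_union hdisj] at hbin
    rw [hT]; linarith
  -- reindex the second sum
  have h2 : ∑ ℓ ∈ Finset.Icc α k, (k.choose ℓ : ℝ) * (q ^ ℓ * p ^ (k - ℓ + 1))
      = ∑ j ∈ Finset.range α, (k.choose j : ℝ) * p ^ j * q ^ (k - j) * p := by
    apply Finset.sum_nbij' (fun ℓ => k - ℓ) (fun j => k - j)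
    · intro ℓ hℓ
      simp only [Finset.mem_Icc] at hℓ
      simp only [Finset.mem_range]
      omega
    · intro j hj
      simp only [Finset.mem_range] at hj
      simp only [Finset.mem_Icc]
      omega
    · intro ℓ hℓ
      simp only [Finset.mem_Icc] at hℓ
      omega
    · intro j hj
      simp only [Finset.mem_range] at hj
      omega
    · intro ℓ hℓ
      simp only [Finset.mem_Icc] at hℓ
      have h1 : k - (k - ℓ) = ℓ := by omega
      have h2 : (k.choose (k - ℓ) : ℝ) = k.choose ℓ := by
        rw [Nat.choose_symm hℓ.2]
      rw [h1, h2]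
      ring
  -- put it all together
  rw [slushDelta]
  have hexp : ∀ ℓ ∈ Finset.Icc α k,
      (k.choose ℓ : ℝ) * (p ^ ℓ * q ^ (k - ℓ + 1) - q ^ ℓ * p ^ (k - ℓ + 1))
      = q * ((k.choose ℓ : ℝ) * p ^ ℓ * q ^ (k - ℓ))
        - (k.choose ℓ : ℝ) * (q ^ ℓ * p ^ (k - ℓ + 1)) := by
    intro ℓ hℓ
    rw [pow_succ]
    ring
  rw [Finset.sum_congr rfl hexp, Finset.sum_sub_distrib, ← Finset.mul_sum, ← hT, h2,
    ← Finset.sum_mul, hsplit]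
  rw [hq]
  ring
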